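/- arXiv:1906.02149 — 2 statements merged into one kernel-verified Lean document; each statement's English description precedes it below -/
import Mathlib

section
/- Let φ: S → T be a premorphism between restriction semigroups. If s ∼ t in S, then φ(s) ∼ φ(t) in T. -/
/-- A (two-sided) restriction semigroup: a semigroup with unary operations
`rstar` (`x ↦ x^*`) and `rplus` (`x ↦ x^+`) satisfying the standard identities. -/
class RestrictionSemigroup (S : Type*) extends Semigroup S where
  rstar : S → S
  rplus : S → S
  rplus_mul_self : ∀ x : S, rplus x * x = x
  rplus_comm : ∀ x y : S, rplus x * rplus y = rplus y * rplus x
  rplus_rplus_mul : ∀ x y : S, rplus (rplus x * y) = rplus x * rplus y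
  mul_rplus : ∀ x y : S, rplus (x * y) * x = x * rplus y
  mul_rstar_self : ∀ x : S, x * rstar x = x
  rstar_comm : ∀ x y : S, rstar x * rstar y = rstar y * rstar x
  rstar_mul_rstar : ∀ x y : S, rstar (x * rstar y) = rstar x * rstar y
  rstar_mul : ∀ x y : S, y * rstar (x * y) = rstar x * y
  rstar_rplus : ∀ x : S, rstar (rplus x) = rplus x
  rplus_rstar : ∀ x : S, rplus (rstar x) = rstar x

open RestrictionSemigroup

/-- `e` is a projection: `e ∈ P(S) = {s^* : s ∈ S}`. -/
def IsProj {S : Type*} [RestrictionSemigroup S] (e : S) : Prop :=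
  ∃ s : S, rstar s = e

/-- The natural partial order: `s ≤ t` iff `s = t f` for some projection `f`. -/
def rle {S : Type*} [RestrictionSemigroup S] (s t : S) : Prop :=
  ∃ f : S, IsProj f ∧ s = t * f

/-- Compatibility: `s ∼ t` iff `s t^* = t s^*` and `t^+ s = s^+ t`. -/
def compat {S : Type*} [RestrictionSemigroup S] (s t : S) : Prop :=
  s * rstar t = t * rstar s ∧ rplus t * s = rplus s * t

section Aux
variable {S : Type*} [RestrictionSemigroup S]

lemma rstar_rstar' (s : S) : rstar (rstar s) = rstar s := by
  have h := rstar_rplus (rstar s)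
  rwa [rplus_rstar] at h

lemma rplus_proj' {e : S} (h : IsProj e) : rplus e = e := by
  obtain ⟨a, rfl⟩ := h; exact rplus_rstar a

lemma rstar_proj' {e : S} (h : IsProj e) : rstar e = e := by
  obtain ⟨a, rfl⟩ := h; exact rstar_rstar' a

lemma isProj_mul' {e f : S} (he : IsProj e) (hf : IsProj f) : IsProj (e * f) := by
  obtain ⟨b, rfl⟩ := hf
  exact ⟨e * rstar b, by rw [rstar_mul_rstar, rstar_proj' he]⟩

lemma rle_eq_star {a b : S} (h : rle a b) : a = b * rstar a := by
  obtain ⟨f, hf, rfl⟩ := h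
  obtain ⟨c, rfl⟩ := hf
  rw [rstar_mul_rstar, ← mul_assoc, mul_rstar_self]

lemma rle_eq_plus {a b : S} (h : rle a b) : a = rplus a * b := by
  obtain ⟨f, hf, rfl⟩ := h
  rw [mul_rplus, rplus_proj' hf]

end Aux

theorem stmt7 {S T : Type*} [RestrictionSemigroup S] [RestrictionSemigroup T]
    (φ : S → T)
    (hPM1 : ∀ s t : S, rle (φ s * φ t) (φ (s * t)))
    (hPM2 : ∀ s : S, rle (rstar (φ s)) (φ (rstar s)))
    (hPM3 : ∀ s : S, rle (rplus (φ s)) (φ (rplus s)))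
    (s t : S) (h : compat s t) :
    compat (φ s) (φ t) := by
  have key1 : ∀ u v : S, rle (φ u * rstar (φ v)) (φ (u * rstar v)) := by
    intro u v
    obtain ⟨f, hf, hfeq⟩ := hPM2 v
    obtain ⟨g, hg, hgeq⟩ := hPM1 u (rstar v)
    refine ⟨g * f, isProj_mul' hg hf, ?_⟩
    rw [hfeq, ← mul_assoc, hgeq, mul_assoc]
  have key2 : ∀ u v : S, rle (rplus (φ v) * φ u) (φ (rplus v * u)) := by
    intro u v
    obtain ⟨f, hf, hfeq⟩ := hPM3 v
    obtain ⟨g, hg, hgeq⟩ := hPM1 (rplus v) u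
    refine ⟨g * rstar (f * φ u), isProj_mul' hg ⟨f * φ u, rfl⟩, ?_⟩
    have hfu : f * φ u = φ u * rstar (f * φ u) := by
      have := rstar_mul f (φ u)
      rw [rstar_proj' hf] at this
      exact this.symm
    rw [hfeq, mul_assoc]
    conv_lhs => rw [hfu, ← mul_assoc, hgeq, mul_assoc]
  constructor
  · have ha := rle_eq_star (key1 s t)
    have hb := rle_eq_star (key1 t s)
    rw [h.1] at ha
    rw [rstar_mul_rstar] at ha hb
    rw [ha, hb, rstar_comm]
  · have ha := rle_eq_plus (key2 s t)
    have hb := rle_eq_plus (key2 t s)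
    rw [h.2] at ha
    rw [rplus_rplus_mul] at ha hb
    rw [ha, hb, rplus_comm]
end

section
/- Let ψ: T → S be a proper morphism between restriction semigroups, s ∈ S, and e, f ∈ P(T). (1) (Well-definedness of ψ̂_s) If e ≤ t^* and e ≤ r^* where t, r ∈ T satisfy ψ(t) ≤ s and ψ(r) ≤ s, then (t e)^+ = (r e)^+. (2) (Injectivity of ψ̂_s) If e ≤ t^* and f ≤ r^* where t, r ∈ T satisfy ψ(t) ≤ s and ψ(r) ≤ s, and (t e)^+ = (r f)^+, then e = f. -/
open RestrictionSemigroup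

section Helpers
variable {S : Type*} [RestrictionSemigroup S]

lemma proj_rstar {e : S} (he : IsProj e) : rstar e = e := by
  obtain ⟨a, rfl⟩ := he
  have h := rstar_rplus (rstar a)
  rwa [rplus_rstar] at h

lemma proj_rplus {e : S} (he : IsProj e) : rplus e = e := by
  obtain ⟨a, rfl⟩ := he; exact rplus_rstar a

lemma proj_mul_self {e : S} (he : IsProj e) : e * e = e := by
  obtain ⟨a, rfl⟩ := he
  rw [← rstar_mul_rstar, mul_rstar_self]

lemma proj_comm {e f : S} (he : IsProj e) (hf : IsProj f) : e * f = f * e := by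
  obtain ⟨a, rfl⟩ := he; obtain ⟨b, rfl⟩ := hf; exact rstar_comm a b

lemma rle_mul_rstar {e t : S} (he : IsProj e) (h : rle e (rstar t)) :
    rstar t * e = e := by
  obtain ⟨h0, hp, rfl⟩ := h
  have hrt : IsProj (rstar t) := ⟨t, rfl⟩
  calc rstar t * (rstar t * h0) = rstar t * rstar t * h0 := by rw [mul_assoc]
    _ = rstar t * h0 := by rw [proj_mul_self hrt]

lemma rstar_mul_proj {t e : S} (he : IsProj e) (h : rle e (rstar t)) :
    rstar (t * e) = e := by
  conv_lhs => rw [← proj_rstar he]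
  rw [rstar_mul_rstar, proj_rstar he]
  exact rle_mul_rstar he h

lemma rplus_mul_eq {t e : S} (he : IsProj e) : rplus (t * e) * t = t * e := by
  have h := mul_rplus t e
  rwa [proj_rplus he] at h

lemma le_eq_rplus_mul {a c : S} (h : rle a c) : a = rplus a * c := by
  obtain ⟨h0, hp, rfl⟩ := h
  rw [mul_rplus, proj_rplus hp]

lemma le_eq_mul_rstar {a c : S} (h : rle a c) : a = c * rstar a := by
  obtain ⟨h0, hp, rfl⟩ := h
  have hr : rstar (c * h0) = rstar c * h0 := by
    conv_lhs => rw [← proj_rstar hp]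
    rw [rstar_mul_rstar, proj_rstar hp]
  rw [hr, ← mul_assoc, mul_rstar_self]

end Helpers

theorem stmt16 {T S : Type*} [RestrictionSemigroup T] [RestrictionSemigroup S]
    (ψ : T → S) (hsurj : Function.Surjective ψ)
    (hmul : ∀ a b : T, ψ (a * b) = ψ a * ψ b)
    (hstar : ∀ a : T, ψ (rstar a) = rstar (ψ a))
    (hplus : ∀ a : T, ψ (rplus a) = rplus (ψ a))
    (hproper : ∀ a b : T, ψ a = ψ b → compat a b)
    (s : S) (e f : T) (he : IsProj e) (hf : IsProj f) :
    (∀ t r : T, rle e (rstar t) → rle (ψ t) s → rle e (rstar r) → rle (ψ r) s →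
        rplus (t * e) = rplus (r * e)) ∧
    (∀ t r : T, rle e (rstar t) → rle (ψ t) s → rle f (rstar r) → rle (ψ r) s →
        rplus (t * e) = rplus (r * f) → e = f) := by
  have hψproj : ∀ g : T, IsProj g → IsProj (ψ g) := fun g hg =>
    ⟨ψ g, by rw [← hstar, proj_rstar hg]⟩
  constructor
  · intro t r hte hts hre hrs
    obtain ⟨p, hp, hteq⟩ := hts
    obtain ⟨q, hq, hreq⟩ := hrs
    have h1 : rstar (t * e) = e := rstar_mul_proj he hte
    have h2 : rstar (r * e) = e := rstar_mul_proj he hre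
    have hψe : IsProj (ψ e) := hψproj e he
    have key : ∀ (x : T) (p0 : S), IsProj p0 → ψ x = s * p0 → rstar (x * e) = e →
        ψ (x * e) = s * ψ e := by
      intro x p0 hp0 hxeq hxe
      have hle : rle (ψ (x * e)) (s * ψ e) := by
        refine ⟨p0, hp0, ?_⟩
        rw [hmul, hxeq, mul_assoc, proj_comm hp0 hψe, ← mul_assoc]
      have h := le_eq_mul_rstar hle
      rwa [← hstar, hxe, mul_assoc, proj_mul_self hψe] at h
    have hv1 := key t p hp hteq h1
    have hv2 := key r q hq hreq h2
    have hc := hproper (t * e) (r * e) (hv1.trans hv2.symm)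
    have h3 := hc.1
    rw [h1, h2, mul_assoc, mul_assoc, proj_mul_self he] at h3
    rw [h3]
  · intro t r hte hts hrf hrs hg
    obtain ⟨p, hp, hteq⟩ := hts
    obtain ⟨q, hq, hreq⟩ := hrs
    have h1 : rstar (t * e) = e := rstar_mul_proj he hte
    have h2 : rstar (r * f) = f := rstar_mul_proj hf hrf
    have key2 : ∀ (x g0 : T) (p0 : S), IsProj g0 → IsProj p0 → ψ x = s * p0 →
        ψ (x * g0) = ψ (rplus (x * g0)) * s := by
      intro x g0 p0 hg0 hp0 hxeq
      have hgp : IsProj (ψ (rplus (x * g0))) :=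
        hψproj _ ⟨rplus (x * g0), rstar_rplus _⟩
      have hle : rle (ψ (x * g0)) (ψ (rplus (x * g0)) * s) := by
        refine ⟨p0, hp0, ?_⟩
        conv_lhs => rw [← rplus_mul_eq hg0]
        rw [hmul, hxeq, ← mul_assoc]
      have h := le_eq_rplus_mul hle
      rwa [← hplus, ← mul_assoc, proj_mul_self hgp] at h
    have hv1 := key2 t e p he hp hteq
    have hv2 := key2 r f q hf hq hreq
    rw [← hg] at hv2
    have hc := hproper (t * e) (r * f) (hv1.trans hv2.symm)
    have h3 := hc.2
    rw [← hg, rplus_mul_self, hg, rplus_mul_self] at h3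
    rw [← h1, ← h2, h3]
end
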